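/- Fix α ∈ (0,1), ν > 0 and L̂ ≥ L > 0. Let P be symmetric positive definite and K₀ a matrix such that Ψ + Γᵀ M(L̂) Γ ⪯ 0, and let ξ₁, …, ξ_{n_c} ∈ ℝ^{n_u} satisfy ξᵢᵀ K₀ P⁻¹ K₀ᵀ ξᵢ ≤ 1 for every i = 1, …, n_c. Then for every initial state x₀ in the ellipsoid E_P = {x : xᵀ P x ≤ 1}, the trajectory of the closed-loop system x_{t+1} = (A + B K₀) x_t + G φ(C_q x_t) satisfies: (a) x_t ∈ E_P for all t ∈ ℕ; (b) ‖x_t‖ ≤ √(λ_max(P)/λ_min(P)) · αᵗ · ‖x₀‖ for all t ∈ ℕ, so x = 0 is locally exponentially stable with decay rate α and domain of attraction E_P; and (c) the control inputs u_t = K₀ x_t satisfy the constraints ξᵢᵀ u_t ≤ 1 for all t ∈ ℕ and all i = 1, …, n_c. (Theorem 7.) -/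

import Mathlib

open Matrix

/-- The Euclidean norm of a vector in `ℝ^k`. -/
noncomputable def eNorm {k : ℕ} (x : Fin k → ℝ) : ℝ := Real.sqrt (x ⬝ᵥ x)

lemma dp_self_nonneg {k : Type*} [Fintype k] (x : k → ℝ) : 0 ≤ x ⬝ᵥ x :=
  Finset.sum_nonneg fun _ _ => mul_self_nonneg _

lemma dp_cs {k : Type*} [Fintype k] (u v : k → ℝ) : (u ⬝ᵥ v) ^ 2 ≤ (u ⬝ᵥ u) * (v ⬝ᵥ v) := by
  simpa [dotProduct, sq] using Finset.sum_mul_sq_le_sq_mul_sq Finset.univ u v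

lemma tquad {k l m : Type*} [Fintype k] [Fintype l] [Fintype m]
    (M : Matrix k l ℝ) (P : Matrix k k ℝ)
    (N : Matrix k m ℝ) (a : l → ℝ) (b : m → ℝ) :
    a ⬝ᵥ (Mᵀ * P * N) *ᵥ b = (M *ᵥ a) ⬝ᵥ P *ᵥ (N *ᵥ b) := by
  rw [← mulVec_mulVec, ← mulVec_mulVec, dotProduct_mulVec, vecMul_transpose]

lemma quad_fromBlocks {k l : Type*} [Fintype k] [Fintype l]
    (M11 : Matrix k k ℝ) (M12 : Matrix k l ℝ) (M21 : Matrix l k ℝ) (M22 : Matrix l l ℝ)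
    (u : k → ℝ) (v : l → ℝ) :
    Sum.elim u v ⬝ᵥ (fromBlocks M11 M12 M21 M22) *ᵥ Sum.elim u v
      = (u ⬝ᵥ M11 *ᵥ u + u ⬝ᵥ M12 *ᵥ v) + (v ⬝ᵥ M21 *ᵥ u + v ⬝ᵥ M22 *ᵥ v) := by
  rw [fromBlocks_mulVec, sumElim_dotProduct_sumElim, dotProduct_add, dotProduct_add]
  simp

lemma psd_cs {k : Type*} [Fintype k] [DecidableEq k] {P : Matrix k k ℝ} (hP : P.PosSemidef)
    (a b : k → ℝ) :
    (a ⬝ᵥ P *ᵥ b) ^ 2 ≤ (a ⬝ᵥ P *ᵥ a) * (b ⬝ᵥ P *ᵥ b) := by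
  have hPT : Pᵀ = P := by rw [← conjTranspose_eq_transpose_of_trivial]; exact hP.1
  have hsymm : b ⬝ᵥ P *ᵥ a = a ⬝ᵥ P *ᵥ b := by
    rw [dotProduct_mulVec, ← mulVec_transpose, hPT, dotProduct_comm]
  have hq : ∀ s : ℝ, 0 ≤ (b ⬝ᵥ P *ᵥ b) * (s * s) + (2 * (a ⬝ᵥ P *ᵥ b)) * s + (a ⬝ᵥ P *ᵥ a) := by
    intro s
    have h := hP.dotProduct_mulVec_nonneg (a + s • b)
    simp only [star_trivial, mulVec_add, mulVec_smul, dotProduct_add, add_dotProduct,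
      dotProduct_smul, smul_dotProduct, smul_eq_mul, hsymm] at h
    nlinarith [h]
  have hd := discrim_le_zero hq
  unfold discrim at hd
  nlinarith [hd]

lemma spectral_sums {k : ℕ} {P : Matrix (Fin k) (Fin k) ℝ} (hP : P.IsHermitian)
    (x : Fin k → ℝ) :
    ∃ y : Fin k → ℝ, x ⬝ᵥ P *ᵥ x = ∑ i, hP.eigenvalues i * (y i) ^ 2 ∧
      x ⬝ᵥ x = ∑ i, (y i) ^ 2 := by
  set U : Matrix (Fin k) (Fin k) ℝ := (hP.eigenvectorUnitary : Matrix (Fin k) (Fin k) ℝ) with hU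
  have hstar : star U = Uᵀ := by
    ext i j; simp [Matrix.star_apply]
  have hUU : U * Uᵀ = 1 := by
    have := (Matrix.mem_unitaryGroup_iff).mp hP.eigenvectorUnitary.2
    rwa [hstar] at this
  have hdiag : (RCLike.ofReal ∘ hP.eigenvalues : Fin k → ℝ) = hP.eigenvalues := by
    funext i; simp
  have hform : P = (Uᵀ)ᵀ * diagonal hP.eigenvalues * Uᵀ := by
    rw [transpose_transpose, ← hdiag, ← hstar]
    exact hP.spectral_theorem
  refine ⟨Uᵀ *ᵥ x, ?_, ?_⟩
  · conv_lhs => rw [hform]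
    rw [tquad]
    simp [dotProduct, mulVec_diagonal]
    exact Finset.sum_congr rfl fun i _ => by ring
  · have h1 : x ⬝ᵥ x = x ⬝ᵥ ((Uᵀ)ᵀ * 1 * Uᵀ) *ᵥ x := by
      rw [transpose_transpose, mul_one, hUU, one_mulVec]
    rw [h1, tquad, one_mulVec]
    simp [dotProduct, sq]

lemma quad_le_sup {k : ℕ} {P : Matrix (Fin k) (Fin k) ℝ} (hP : P.IsHermitian)
    (x : Fin k → ℝ) :
    x ⬝ᵥ P *ᵥ x ≤ (⨆ i, hP.eigenvalues i) * (x ⬝ᵥ x) := by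
  obtain ⟨y, h1, h2⟩ := spectral_sums hP x
  rw [h1, h2, Finset.mul_sum]
  refine Finset.sum_le_sum fun i _ => ?_
  exact mul_le_mul_of_nonneg_right
    (le_ciSup (Set.Finite.bddAbove (Set.finite_range _)) i) (sq_nonneg _)

lemma inf_quad_le {k : ℕ} {P : Matrix (Fin k) (Fin k) ℝ} (hP : P.IsHermitian)
    (x : Fin k → ℝ) :
    (⨅ i, hP.eigenvalues i) * (x ⬝ᵥ x) ≤ x ⬝ᵥ P *ᵥ x := by
  obtain ⟨y, h1, h2⟩ := spectral_sums hP x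
  rw [h1, h2, Finset.mul_sum]
  refine Finset.sum_le_sum fun i _ => ?_
  exact mul_le_mul_of_nonneg_right
    (ciInf_le (Set.Finite.bddBelow (Set.finite_range _)) i) (sq_nonneg _)

/-- **Theorem 7.** Fix `α ∈ (0,1)`, `ν > 0`, and `L̂ ≥ L > 0`. If `P ≻ 0` and
`K₀` satisfy `Ψ + Γᵀ M(L̂) Γ ⪯ 0` and `ξᵢᵀ K₀ P⁻¹ K₀ᵀ ξᵢ ≤ 1` for each
constraint vector `ξᵢ`, then for every initial state in `E_P = {x : xᵀPx ≤ 1}`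
the closed-loop trajectory stays in `E_P`, satisfies the exponential bound
`‖x_t‖ ≤ √(λ_max(P)/λ_min(P)) αᵗ ‖x₀‖`, and the inputs `u_t = K₀x_t` satisfy
`ξᵢᵀ u_t ≤ 1` for all `t` and `i`. -/
theorem constrained_local_exponential_stability
    {nx nu nφ nq nc : ℕ}
    (A : Matrix (Fin nx) (Fin nx) ℝ) (B : Matrix (Fin nx) (Fin nu) ℝ)
    (G : Matrix (Fin nx) (Fin nφ) ℝ) (Cq : Matrix (Fin nq) (Fin nx) ℝ)
    (K₀ : Matrix (Fin nu) (Fin nx) ℝ)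
    (φ : (Fin nq → ℝ) → (Fin nφ → ℝ)) (hφ0 : φ 0 = 0)
    (L Lhat : ℝ) (hL : 0 < L) (hLLhat : L ≤ Lhat)
    (hφLip : ∀ q₁ q₂, eNorm (φ q₁ - φ q₂) ≤ L * eNorm (q₁ - q₂))
    (P : Matrix (Fin nx) (Fin nx) ℝ) (hP : P.PosDef)
    (α : ℝ) (hα : α ∈ Set.Ioo (0 : ℝ) 1) (ν : ℝ) (hν : 0 < ν)
    (hLMI :
      (-(Matrix.fromBlocks
          ((A + B * K₀)ᵀ * P * (A + B * K₀) - α ^ 2 • P)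
          ((A + B * K₀)ᵀ * P * G)
          (Gᵀ * P * (A + B * K₀))
          (Gᵀ * P * G) +
        (Matrix.fromBlocks Cq 0 0 (1 : Matrix (Fin nφ) (Fin nφ) ℝ))ᵀ *
          Matrix.fromBlocks ((ν⁻¹ * Lhat ^ 2) • (1 : Matrix (Fin nq) (Fin nq) ℝ)) 0 0
            ((-ν⁻¹) • (1 : Matrix (Fin nφ) (Fin nφ) ℝ)) *
          Matrix.fromBlocks Cq 0 0 (1 : Matrix (Fin nφ) (Fin nφ) ℝ))).PosSemidef)
    (ξ : Fin nc → (Fin nu → ℝ))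
    (hξ : ∀ i, ξ i ⬝ᵥ (K₀ * P⁻¹ * K₀ᵀ).mulVec (ξ i) ≤ 1) :
    ∀ x : ℕ → (Fin nx → ℝ),
      x 0 ⬝ᵥ P.mulVec (x 0) ≤ 1 →
      (∀ t, x (t + 1) = (A + B * K₀).mulVec (x t) + G.mulVec (φ (Cq.mulVec (x t)))) →
      (∀ t : ℕ, x t ⬝ᵥ P.mulVec (x t) ≤ 1) ∧
      (∀ t : ℕ, eNorm (x t) ≤
        Real.sqrt ((⨆ i, hP.1.eigenvalues i) / (⨅ i, hP.1.eigenvalues i)) *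
          α ^ t * eNorm (x 0)) ∧
      (∀ (t : ℕ) (i : Fin nc), ξ i ⬝ᵥ K₀.mulVec (x t) ≤ 1) := by
  obtain ⟨hα0, hα1⟩ := hα
  intro x hx0 hdyn
  set Acl : Matrix (Fin nx) (Fin nx) ℝ := A + B * K₀ with hAcl
  -- the decrease step
  have hstep : ∀ t, x (t+1) ⬝ᵥ P *ᵥ (x (t+1)) ≤ α ^ 2 * (x t ⬝ᵥ P *ᵥ x t) := by
    intro t
    set u := x t with hu
    set q : Fin nq → ℝ := Cq *ᵥ u with hq
    set w : Fin nφ → ℝ := φ q with hw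
    set z : (Fin nx ⊕ Fin nφ) → ℝ := Sum.elim u w with hz
    have h0 := hLMI.dotProduct_mulVec_nonneg z
    rw [star_trivial, neg_mulVec, dotProduct_neg] at h0
    have h0' : z ⬝ᵥ
        (Matrix.fromBlocks (Aclᵀ * P * Acl - α ^ 2 • P) (Aclᵀ * P * G)
          (Gᵀ * P * Acl) (Gᵀ * P * G) +
        (Matrix.fromBlocks Cq 0 0 (1 : Matrix (Fin nφ) (Fin nφ) ℝ))ᵀ *
          Matrix.fromBlocks ((ν⁻¹ * Lhat ^ 2) • (1 : Matrix (Fin nq) (Fin nq) ℝ)) 0 0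
            ((-ν⁻¹) • (1 : Matrix (Fin nφ) (Fin nφ) ℝ)) *
          Matrix.fromBlocks Cq 0 0 (1 : Matrix (Fin nφ) (Fin nφ) ℝ)) *ᵥ z ≤ 0 := by
      linarith
    rw [add_mulVec, dotProduct_add] at h0'
    -- the Ψ part
    have hΨ : z ⬝ᵥ
        (Matrix.fromBlocks (Aclᵀ * P * Acl - α ^ 2 • P) (Aclᵀ * P * G)
          (Gᵀ * P * Acl) (Gᵀ * P * G)) *ᵥ z
        = (x (t+1)) ⬝ᵥ P *ᵥ (x (t+1)) - α ^ 2 * (u ⬝ᵥ P *ᵥ u) := by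
      rw [hdyn t]
      rw [hz, quad_fromBlocks, sub_mulVec, dotProduct_sub, tquad, tquad, tquad, tquad,
        smul_mulVec, dotProduct_smul, smul_eq_mul]
      rw [mulVec_add, dotProduct_add, add_dotProduct, add_dotProduct]
      ring
    -- the Γᵀ M Γ part
    have hΓ : z ⬝ᵥ
        ((Matrix.fromBlocks Cq 0 0 (1 : Matrix (Fin nφ) (Fin nφ) ℝ))ᵀ *
          Matrix.fromBlocks ((ν⁻¹ * Lhat ^ 2) • (1 : Matrix (Fin nq) (Fin nq) ℝ)) 0 0
            ((-ν⁻¹) • (1 : Matrix (Fin nφ) (Fin nφ) ℝ)) *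
          Matrix.fromBlocks Cq 0 0 (1 : Matrix (Fin nφ) (Fin nφ) ℝ)) *ᵥ z
        = ν⁻¹ * Lhat ^ 2 * (q ⬝ᵥ q) - ν⁻¹ * (w ⬝ᵥ w) := by
      rw [tquad]
      have hΓz : (Matrix.fromBlocks Cq 0 0 (1 : Matrix (Fin nφ) (Fin nφ) ℝ)) *ᵥ z
          = Sum.elim q w := by
        rw [hz, fromBlocks_mulVec]
        simp [hq]
      rw [hΓz, quad_fromBlocks]
      simp only [smul_mulVec, one_mulVec, zero_mulVec, dotProduct_zero,
        dotProduct_smul, smul_eq_mul]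
      ring
    -- Lipschitz bound
    have hqq : (0:ℝ) ≤ q ⬝ᵥ q := dp_self_nonneg q
    have hww : w ⬝ᵥ w ≤ Lhat ^ 2 * (q ⬝ᵥ q) := by
      have h1 := hφLip q 0
      rw [hφ0, sub_zero, sub_zero] at h1
      have h2 : eNorm w ^ 2 ≤ (L * eNorm q) ^ 2 := by
        have h3 : (0:ℝ) ≤ eNorm w := Real.sqrt_nonneg _
        nlinarith
      rw [eNorm, eNorm, mul_pow, Real.sq_sqrt (dp_self_nonneg w),
        Real.sq_sqrt hqq] at h2
      have hL2 : L ^ 2 * (q ⬝ᵥ q) ≤ Lhat ^ 2 * (q ⬝ᵥ q) :=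
        mul_le_mul_of_nonneg_right (by nlinarith) hqq
      linarith
    have hν' : (0:ℝ) ≤ ν⁻¹ := le_of_lt (inv_pos.mpr hν)
    have hpos : 0 ≤ ν⁻¹ * Lhat ^ 2 * (q ⬝ᵥ q) - ν⁻¹ * (w ⬝ᵥ w) := by
      have := mul_le_mul_of_nonneg_left hww hν'
      nlinarith
    rw [hΨ, hΓ] at h0'
    linarith
  -- the Lyapunov decay by induction
  have hV : ∀ t, x t ⬝ᵥ P *ᵥ x t ≤ (α ^ 2) ^ t * (x 0 ⬝ᵥ P *ᵥ x 0) := by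
    intro t
    induction t with
    | zero => simp
    | succ n ih =>
      calc x (n+1) ⬝ᵥ P *ᵥ x (n+1) ≤ α ^ 2 * (x n ⬝ᵥ P *ᵥ x n) := hstep n
        _ ≤ α ^ 2 * ((α ^ 2) ^ n * (x 0 ⬝ᵥ P *ᵥ x 0)) :=
            mul_le_mul_of_nonneg_left ih (sq_nonneg α)
        _ = (α ^ 2) ^ (n+1) * (x 0 ⬝ᵥ P *ᵥ x 0) := by ring
  have hV0 : (0:ℝ) ≤ x 0 ⬝ᵥ P *ᵥ x 0 := by
    have := hP.posSemidef.dotProduct_mulVec_nonneg (x 0)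
    simpa using this
  have hα2t : ∀ t : ℕ, (α ^ 2) ^ t ≤ 1 := fun t =>
    pow_le_one₀ (sq_nonneg α) (by nlinarith)
  have hEP : ∀ t : ℕ, x t ⬝ᵥ P *ᵥ x t ≤ 1 := by
    intro t
    calc x t ⬝ᵥ P *ᵥ x t ≤ (α ^ 2) ^ t * (x 0 ⬝ᵥ P *ᵥ x 0) := hV t
      _ ≤ 1 * 1 := mul_le_mul (hα2t t) hx0 hV0 zero_le_one
      _ = 1 := one_mul 1
  refine ⟨hEP, ?_, ?_⟩
  · -- exponential bound
    intro t
    rcases Nat.eq_zero_or_pos nx with hnx | hnx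
    · subst hnx
      have h1 : eNorm (x t) = 0 := by
        simp [eNorm, dotProduct]
      have h2 : eNorm (x 0) = 0 := by
        simp [eNorm, dotProduct]
      rw [h1, h2, mul_zero]
    · haveI : Nonempty (Fin nx) := Fin.pos_iff_nonempty.mp hnx
      set lmin := ⨅ i, hP.1.eigenvalues i with hlmin
      set lmax := ⨆ i, hP.1.eigenvalues i with hlmax
      obtain ⟨i0, hi0⟩ := Finite.exists_min hP.1.eigenvalues
      have hlminpos : 0 < lmin :=
        lt_of_lt_of_le (hP.eigenvalues_pos i0) (le_ciInf hi0)
      have hlmaxpos : 0 < lmax :=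
        lt_of_lt_of_le (hP.eigenvalues_pos i0)
          (le_ciSup (Set.Finite.bddAbove (Set.finite_range _)) i0)
      have hchain : lmin * (x t ⬝ᵥ x t) ≤ (α ^ t) ^ 2 * (lmax * (x 0 ⬝ᵥ x 0)) := by
        calc lmin * (x t ⬝ᵥ x t) ≤ x t ⬝ᵥ P *ᵥ x t := inf_quad_le hP.1 (x t)
          _ ≤ (α ^ 2) ^ t * (x 0 ⬝ᵥ P *ᵥ x 0) := hV t
          _ ≤ (α ^ 2) ^ t * (lmax * (x 0 ⬝ᵥ x 0)) :=
              mul_le_mul_of_nonneg_left (quad_le_sup hP.1 (x 0))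
                (pow_nonneg (sq_nonneg α) t)
          _ = (α ^ t) ^ 2 * (lmax * (x 0 ⬝ᵥ x 0)) := by rw [← pow_mul, ← pow_mul, Nat.mul_comm]
      have h1 : x t ⬝ᵥ x t ≤ (lmax / lmin) * ((α ^ t) ^ 2 * (x 0 ⬝ᵥ x 0)) := by
        rw [div_mul_eq_mul_div, le_div_iff₀ hlminpos]
        calc x t ⬝ᵥ x t * lmin = lmin * (x t ⬝ᵥ x t) := mul_comm _ _
          _ ≤ (α ^ t) ^ 2 * (lmax * (x 0 ⬝ᵥ x 0)) := hchain
          _ = lmax * ((α ^ t) ^ 2 * (x 0 ⬝ᵥ x 0)) := by ring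
      have hratio : (0:ℝ) ≤ lmax / lmin := le_of_lt (div_pos hlmaxpos hlminpos)
      calc eNorm (x t) = Real.sqrt (x t ⬝ᵥ x t) := rfl
        _ ≤ Real.sqrt ((lmax / lmin) * ((α ^ t) ^ 2 * (x 0 ⬝ᵥ x 0))) :=
            Real.sqrt_le_sqrt h1
        _ = Real.sqrt (lmax / lmin) * (Real.sqrt ((α ^ t) ^ 2) * Real.sqrt (x 0 ⬝ᵥ x 0)) := by
            rw [Real.sqrt_mul hratio, Real.sqrt_mul (sq_nonneg _)]
        _ = Real.sqrt (lmax / lmin) * α ^ t * eNorm (x 0) := by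
            rw [Real.sqrt_sq (pow_nonneg (le_of_lt hα0) t), eNorm, mul_assoc]
  · -- constraints
    intro t i
    have hdet : IsUnit P.det := isUnit_iff_ne_zero.mpr (ne_of_gt hP.det_pos)
    have hPPinv : P * P⁻¹ = 1 := mul_nonsing_inv P hdet
    have hPsymm : Pᵀ = P := by
      have := hP.1
      rw [← conjTranspose_eq_transpose_of_trivial]; exact this
    set c : Fin nx → ℝ := K₀ᵀ *ᵥ ξ i with hc
    set v : Fin nx → ℝ := P⁻¹ *ᵥ c with hv
    have hPv : P *ᵥ v = c := by
      rw [hv, mulVec_mulVec, hPPinv, one_mulVec]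
    have key1 : ∀ s : Fin nx → ℝ, v ⬝ᵥ P *ᵥ s = ξ i ⬝ᵥ K₀ *ᵥ s := by
      intro s
      rw [dotProduct_mulVec v P, ← hPsymm, vecMul_transpose, hPv, hc,
        dotProduct_mulVec (ξ i) K₀ s, ← vecMul_transpose, transpose_transpose]
    have key2 : v ⬝ᵥ P *ᵥ v ≤ 1 := by
      have e1 : v ⬝ᵥ P *ᵥ v = ξ i ⬝ᵥ (K₀ * P⁻¹ * K₀ᵀ) *ᵥ ξ i := by
        have e0 : K₀ * P⁻¹ * K₀ᵀ = (K₀ᵀ)ᵀ * P⁻¹ * K₀ᵀ := by rw [transpose_transpose]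
        rw [hPv, e0, tquad, ← hc, ← hv]
        exact dotProduct_comm v c
      rw [e1]
      exact hξ i
    have hcs := psd_cs hP.posSemidef v (x t)
    rw [key1] at hcs
    have hxt := hEP t
    have hvv : (0:ℝ) ≤ v ⬝ᵥ P *ᵥ v := by
      have := hP.posSemidef.dotProduct_mulVec_nonneg v
      simpa using this
    have hxx : (0:ℝ) ≤ x t ⬝ᵥ P *ᵥ x t := by
      have := hP.posSemidef.dotProduct_mulVec_nonneg (x t)
      simpa using this
    have hsq : (ξ i ⬝ᵥ K₀ *ᵥ x t) ^ 2 ≤ 1 := by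
      calc (ξ i ⬝ᵥ K₀ *ᵥ x t) ^ 2 ≤ (v ⬝ᵥ P *ᵥ v) * (x t ⬝ᵥ P *ᵥ x t) := hcs
        _ ≤ 1 * 1 := mul_le_mul key2 hxt hxx zero_le_one
        _ = 1 := one_mul 1
    nlinarith [hsq]
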